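/- On the infinite rooted k-ary tree with k ≥ 2, for the weight w_{−1}(x) = Σ_{j≥0} k^{−j} χ_{T^j}(x) and any γ > 1, the inequality M_γ w_{−1}(x) ≲ w_{−1}(x) fails: for x ∈ T^j, the γ-average over S(x,r) satisfies ((1/|S(x,r)|) Σ_{y∈S(x,r)} w_{−1}(y)^γ)^{1/γ} ≳ k^{−j} k^{(γ−1)r/γ}, which is unbounded in r relative to w_{−1}(x) = k^{−j}. -/

import Mathlib

open scoped ENNReal NNReal BigOperators

noncomputable section

/-- Vertices of the infinite rooted `k`-ary tree: finite words over `Fin k`. -/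
abbrev V (k : ℕ) := List (Fin k)

/-- Length of the longest common prefix (depth of the deepest common ancestor). -/
def lcpLen {k : ℕ} : List (Fin k) → List (Fin k) → ℕ
  | a :: as, b :: bs => if a = b then lcpLen as bs + 1 else 0
  | _, _ => 0

/-- Graph distance on the infinite rooted `k`-ary tree. -/
def tdist {k : ℕ} (x y : V k) : ℕ :=
  (x.length - lcpLen x y) + (y.length - lcpLen x y)

/-- Sphere of radius `r` centered at `x`. -/
def sph {k : ℕ} (x : V k) (r : ℕ) : Set (V k) := {y | tdist x y = r}

/-- Closed ball of radius `r` centered at `x`. -/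
def ball {k : ℕ} (x : V k) (r : ℕ) : Set (V k) := {y | tdist x y ≤ r}

def sphCard {k : ℕ} (x : V k) (r : ℕ) : ℝ≥0∞ := ((sph x r).ncard : ℝ≥0∞)
def ballCard {k : ℕ} (x : V k) (r : ℕ) : ℝ≥0∞ := ((ball x r).ncard : ℝ≥0∞)

/-- `w(A) = Σ_{y ∈ A} w(y)`, the weighted (counting) measure of `A`. -/
def wsum {k : ℕ} (w : V k → ℝ≥0∞) (A : Set (V k)) : ℝ≥0∞ := ∑' y : A, w ↑y

/-- Spherical average `A_r° f (x)`. -/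
def sphAvg {k : ℕ} (f : V k → ℝ≥0∞) (x : V k) (r : ℕ) : ℝ≥0∞ :=
  wsum f (sph x r) / sphCard x r

/-- Spherical maximal operator `M°`. -/
def Msph {k : ℕ} (f : V k → ℝ≥0∞) (x : V k) : ℝ≥0∞ := ⨆ r : ℕ, sphAvg f x r

/-- Centered Hardy–Littlewood maximal operator `M`. -/
def Mball {k : ℕ} (f : V k → ℝ≥0∞) (x : V k) : ℝ≥0∞ :=
  ⨆ r : ℕ, wsum f (ball x r) / ballCard x r

/-- `|f|` of a real-valued function, as an `ℝ≥0∞`-valued function. -/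
def absE {k : ℕ} (f : V k → ℝ) : V k → ℝ≥0∞ := fun y => ENNReal.ofReal |f y|

/-- `M_s w = (M(w^s))^{1/s}` (centered version). -/
def MsBall {k : ℕ} (s : ℝ) (w : V k → ℝ≥0∞) (x : V k) : ℝ≥0∞ :=
  (Mball (fun y => w y ^ s) x) ^ (1 / s)

/-- `M_s° w = (M°(w^s))^{1/s}` (spherical version). -/
def MsSph {k : ℕ} (s : ℝ) (w : V k → ℝ≥0∞) (x : V k) : ℝ≥0∞ :=
  (Msph (fun y => w y ^ s) x) ^ (1 / s)

/-- The radial weight `w_{-1}(x) = k^{-depth x}`. -/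
def wm (k : ℕ) : V k → ℝ≥0∞ := fun x => (k : ℝ≥0∞) ^ (-(x.length : ℝ))


section Aux

lemma lcp_le_left {k : ℕ} : ∀ x y : V k, lcpLen x y ≤ x.length
  | [], _ => by simp [lcpLen]
  | a :: as, [] => by simp [lcpLen]
  | a :: as, b :: bs => by
      simp only [lcpLen, List.length_cons]
      split
      · exact Nat.succ_le_succ (lcp_le_left as bs)
      · omega

lemma lcp_le_right {k : ℕ} : ∀ x y : V k, lcpLen x y ≤ y.length
  | [], _ => by simp [lcpLen]
  | a :: as, [] => by simp [lcpLen]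
  | a :: as, b :: bs => by
      simp only [lcpLen, List.length_cons]
      split
      · exact Nat.succ_le_succ (lcp_le_right as bs)
      · omega

lemma take_lcp_eq {k : ℕ} : ∀ x y : V k, x.take (lcpLen x y) = y.take (lcpLen x y)
  | [], y => by simp [lcpLen]
  | a :: as, [] => by simp [lcpLen]
  | a :: as, b :: bs => by
      simp only [lcpLen]
      split
      · next h => simp [List.take_succ_cons, h, take_lcp_eq as bs]
      · simp

lemma lcp_take {k : ℕ} : ∀ (x : V k) (m : ℕ), lcpLen x (x.take m) = min m x.length
  | [], m => by simp [lcpLen]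
  | a :: as, 0 => by simp [lcpLen]
  | a :: as, m + 1 => by
      simp only [List.take_succ_cons, lcpLen, if_pos rfl, if_true, lcp_take as m,
        List.length_cons]
      omega

lemma lcp_nil_right {k : ℕ} (x : V k) : lcpLen x [] = 0 := by cases x <;> rfl

lemma eq_take_append {k : ℕ} (x y : V k) :
    y = x.take (lcpLen x y) ++ y.drop (lcpLen x y) := by
  rw [take_lcp_eq]; exact (List.take_append_drop _ _).symm

/-- Finset of words of length at most `r`. -/
def FW (k : ℕ) : ℕ → Finset (List (Fin k))
  | 0 => {[]}
  | (r+1) => {[]} ∪ (Finset.univ ×ˢ FW k r).image (fun p => p.1 :: p.2)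

lemma mem_FW {k : ℕ} : ∀ (r : ℕ) (t : List (Fin k)), t.length ≤ r → t ∈ FW k r
  | 0, t, h => by simp_all [FW, List.length_eq_zero_iff.mp (Nat.le_zero.mp h)]
  | r + 1, [], _ => by simp [FW]
  | r + 1, a :: t, h => by
      simp only [FW, Finset.mem_union, Finset.mem_image, Finset.mem_product]
      right
      exact ⟨(a, t), by simp [mem_FW r t (by simpa using h)], rfl⟩

lemma card_FW {k : ℕ} (hk : 2 ≤ k) : ∀ r : ℕ, (FW k r).card ≤ 2 * k ^ r - 1
  | 0 => by simp [FW]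
  | r + 1 => by
      have h1 : (FW k (r+1)).card ≤ 1 + k * (FW k r).card := by
        refine (Finset.card_union_le _ _).trans ?_
        have := Finset.card_image_le (s := Finset.univ ×ˢ FW k r)
          (f := fun p : Fin k × List (Fin k) => p.1 :: p.2)
        simp only [Finset.card_product, Finset.card_univ, Fintype.card_fin] at this
        simpa using this
      have h2 := card_FW hk r
      have hk1 : 1 ≤ k ^ r := Nat.one_le_pow _ _ (by omega)
      have hmul : k * (2 * k ^ r - 1) = 2 * k ^ (r+1) - k := by
        rw [Nat.mul_sub, pow_succ]; ring_nf
      calc (FW k (r+1)).card ≤ 1 + k * (FW k r).card := h1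
        _ ≤ 1 + k * (2 * k ^ r - 1) :=
            Nat.add_le_add_left (Nat.mul_le_mul_left _ h2) _
        _ ≤ 2 * k ^ (r+1) - 1 := by
            rw [hmul]
            have hk2 : k ≤ k * k ^ r := Nat.le_mul_of_pos_right _ (by omega)
            have : k ≤ 2 * k ^ (r+1) := by
              calc k ≤ k * k ^ r := hk2
                _ ≤ 2 * k ^ (r+1) := by rw [pow_succ]; nlinarith
            omega

lemma sph_ncard_le {k : ℕ} (hk : 2 ≤ k) (x : V k) (r : ℕ) :
    (sph x r).ncard ≤ 2 * k ^ r := by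
  have h := Set.ncard_le_ncard_of_injOn (f := fun y : V k => y.drop (lcpLen x y))
    (s := sph x r) (t := ↑(FW k r)) ?_ ?_ (Set.toFinite _)
  · rw [Set.ncard_coe_finset] at h
    exact h.trans ((card_FW hk r).trans (by omega))
  · intro y hy
    have hy' : tdist x y = r := hy
    have h1 := lcp_le_right x y
    have h2 := lcp_le_left x y
    simp only [Finset.mem_coe]
    refine mem_FW r _ ?_
    rw [List.length_drop]
    unfold tdist at hy'
    omega
  · intro y1 h1 y2 h2 heq
    have e1 : tdist x y1 = r := h1
    have e2 : tdist x y2 = r := h2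
    unfold tdist at e1 e2
    have l1 := lcp_le_right x y1
    have l1' := lcp_le_left x y1
    have l2 := lcp_le_right x y2
    have l2' := lcp_le_left x y2
    have hlen : y1.length - lcpLen x y1 = y2.length - lcpLen x y2 := by
      have := congrArg List.length heq
      simpa [List.length_drop] using this
    have hm : lcpLen x y1 = lcpLen x y2 := by omega
    calc y1 = x.take (lcpLen x y1) ++ y1.drop (lcpLen x y1) := eq_take_append x y1
      _ = x.take (lcpLen x y2) ++ y2.drop (lcpLen x y2) := by
            have heq' : y1.drop (lcpLen x y1) = y2.drop (lcpLen x y2) := heq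
            rw [hm] at heq'; rw [hm, heq']
      _ = y2 := (eq_take_append x y2).symm

lemma ball_ncard_le {k : ℕ} (hk : 2 ≤ k) (x : V k) (n : ℕ) :
    (ball x n).ncard ≤ (x.length + 1) * (2 * k ^ n) := by
  have h := Set.ncard_le_ncard_of_injOn
    (f := fun y : V k => (lcpLen x y, y.drop (lcpLen x y)))
    (s := ball x n) (t := ↑(Finset.range (x.length + 1) ×ˢ FW k n)) ?_ ?_ (Set.toFinite _)
  · rw [Set.ncard_coe_finset, Finset.card_product, Finset.card_range] at h
    exact h.trans (Nat.mul_le_mul_left _ ((card_FW hk n).trans (by omega)))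
  · intro y hy
    have hy' : tdist x y ≤ n := hy
    have h1 := lcp_le_right x y
    have h2 := lcp_le_left x y
    unfold tdist at hy'
    simp only [Finset.coe_product, Set.mem_prod, Finset.mem_coe, Finset.mem_range]
    exact ⟨by omega, mem_FW n _ (by rw [List.length_drop]; omega)⟩
  · intro y1 h1 y2 h2 heq
    simp only [Prod.mk.injEq] at heq
    obtain ⟨hm, ht⟩ := heq
    calc y1 = x.take (lcpLen x y1) ++ y1.drop (lcpLen x y1) := eq_take_append x y1
      _ = x.take (lcpLen x y2) ++ y2.drop (lcpLen x y2) := by rw [hm] at ht ⊢; rw [ht]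
      _ = y2 := (eq_take_append x y2).symm

lemma take_mem_sph {k : ℕ} (x : V k) (r : ℕ) (h : r ≤ x.length) :
    x.take (x.length - r) ∈ sph x r := by
  show tdist x (x.take (x.length - r)) = r
  unfold tdist
  rw [lcp_take, List.length_take]
  omega

end Aux

/-- For `w_{-1}` and any `γ > 1`, the `γ`-average over spheres satisfies
`((1/|S(x,r)|) Σ_{S(x,r)} w_{-1}^γ)^{1/γ} ≳ k^{-j} k^{(γ-1)r/γ}` (for `x ∈ T^j`,
`r ≤ j`), which is unbounded in `r` relative to `w_{-1}(x) = k^{-j}`; hence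
`M_γ w_{-1} ≲ w_{-1}` fails. -/

theorem stmt12 (k : ℕ) (hk : 2 ≤ k) (γ : ℝ) (hγ : 1 < γ) :
    (∃ c : ℝ≥0, 0 < c ∧ ∀ (x : V k) (r : ℕ), r ≤ x.length →
        (c : ℝ≥0∞) * ((k : ℝ≥0∞) ^ (-(x.length : ℝ)) *
            (k : ℝ≥0∞) ^ ((γ - 1) * (r : ℝ) / γ)) ≤
          (sphAvg (fun y => wm k y ^ γ) x r) ^ (1 / γ)) ∧
    ¬ ∃ C : ℝ≥0, ∀ x : V k, MsBall γ (wm k) x ≤ (C : ℝ≥0∞) * wm k x := by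
  have hk0 : k ≠ 0 := by omega
  have hK0 : (k : ℝ≥0∞) ≠ 0 := by exact_mod_cast hk0
  have hKt : (k : ℝ≥0∞) ≠ ⊤ := ENNReal.natCast_ne_top k
  have hK1 : (1 : ℝ≥0∞) ≤ (k : ℝ≥0∞) := by exact_mod_cast (by omega : 1 ≤ k)
  have hγ0 : (0:ℝ) < γ := by linarith
  have hγ1 : (0:ℝ) ≤ 1/γ := by positivity
  have hγle : 1/γ ≤ 1 := by rw [div_le_one hγ0]; linarith
  have Kadd : ∀ a b : ℝ, (k : ℝ≥0∞) ^ (a+b) = (k : ℝ≥0∞)^a * (k : ℝ≥0∞)^b :=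
    fun a b => ENNReal.rpow_add a b hK0 hKt
  constructor
  · refine ⟨1/2, by norm_num, ?_⟩
    intro x r hr
    have hhalf : ((1/2 : ℝ≥0) : ℝ≥0∞) = 2⁻¹ := by
      rw [one_div, ENNReal.coe_inv two_ne_zero, ENNReal.coe_two]
    set n := x.length with hn
    set m := n - r with hmdef
    have hmcast : (m:ℝ) = (n:ℝ) - (r:ℝ) := by
      rw [hmdef, Nat.cast_sub hr]
    have ha : x.take m ∈ sph x r := take_mem_sph x r hr
    have halen : (x.take m).length = m := by rw [List.length_take]; omega
    have hnum : wm k (x.take m) ^ γ ≤ wsum (fun y => wm k y ^ γ) (sph x r) :=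
      ENNReal.le_tsum (f := fun y : sph x r => wm k ↑y ^ γ) ⟨x.take m, ha⟩
    have hden : sphCard x r ≤ ((2 * k ^ r : ℕ) : ℝ≥0∞) :=
      Nat.cast_le.mpr (sph_ncard_le hk x r)
    have step1 : (wm k (x.take m) ^ γ) / ((2 * k ^ r : ℕ) : ℝ≥0∞) ≤
        sphAvg (fun y => wm k y ^ γ) x r := ENNReal.div_le_div hnum hden
    have step2 := ENNReal.rpow_le_rpow step1 hγ1
    refine le_trans ?_ step2
    have hDcast : ((2 * k ^ r : ℕ) : ℝ≥0∞) = 2 * (k : ℝ≥0∞) ^ (r:ℝ) := by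
      push_cast
      rw [ENNReal.rpow_natCast]
    have hwa : wm k (x.take m) = (k : ℝ≥0∞) ^ (-(m:ℝ)) := by rw [wm, halen]
    rw [hDcast, hwa, ENNReal.div_rpow_of_nonneg _ _ hγ1]
    have hnum2 : (((k : ℝ≥0∞) ^ (-(m:ℝ))) ^ γ) ^ (1/γ) = (k : ℝ≥0∞) ^ (-(m:ℝ)) := by
      rw [← ENNReal.rpow_mul, ← ENNReal.rpow_mul]
      congr 1
      field_simp
    rw [hnum2]
    have hden2 : (2 * (k : ℝ≥0∞) ^ (r:ℝ)) ^ (1/γ) ≤ 2 * (k : ℝ≥0∞) ^ ((r:ℝ)/γ) := by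
      rw [ENNReal.mul_rpow_of_nonneg _ _ hγ1, ← ENNReal.rpow_mul, mul_one_div]
      refine mul_le_mul_left ?_ _
      calc (2:ℝ≥0∞)^(1/γ) ≤ 2^(1:ℝ) :=
            ENNReal.rpow_le_rpow_of_exponent_le (by norm_num) hγle
        _ = 2 := ENNReal.rpow_one 2
    refine le_trans (le_of_eq ?_) (ENNReal.div_le_div le_rfl hden2)
    have hb0 : (2:ℝ≥0∞) * (k : ℝ≥0∞) ^ ((r:ℝ)/γ) ≠ 0 :=
      mul_ne_zero two_ne_zero (ENNReal.rpow_pos (pos_iff_ne_zero.mpr hK0) hKt).ne'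
    have hbt : (2:ℝ≥0∞) * (k : ℝ≥0∞) ^ ((r:ℝ)/γ) ≠ ⊤ :=
      ENNReal.mul_ne_top ENNReal.ofNat_ne_top (ENNReal.rpow_ne_top_of_nonneg (by positivity) hKt)
    rw [hhalf, ENNReal.eq_div_iff hb0 hbt]
    calc (2:ℝ≥0∞) * (k : ℝ≥0∞) ^ ((r:ℝ)/γ) *
          (2⁻¹ * ((k : ℝ≥0∞) ^ (-(n:ℝ)) * (k : ℝ≥0∞) ^ ((γ - 1) * (r:ℝ) / γ)))
        = (2⁻¹ * 2) * ((k : ℝ≥0∞) ^ (-(n:ℝ)) *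
            ((k : ℝ≥0∞) ^ ((γ-1)*(r:ℝ)/γ) * (k : ℝ≥0∞) ^ ((r:ℝ)/γ))) := by ring
      _ = (k : ℝ≥0∞) ^ (-(n:ℝ)) * (k : ℝ≥0∞) ^ ((γ-1)*(r:ℝ)/γ + (r:ℝ)/γ) := by
            rw [ENNReal.inv_mul_cancel two_ne_zero ENNReal.ofNat_ne_top, one_mul, ← Kadd]
      _ = (k : ℝ≥0∞) ^ (-(n:ℝ) + ((γ-1)*(r:ℝ)/γ + (r:ℝ)/γ)) := by rw [← Kadd]
      _ = (k : ℝ≥0∞) ^ (-(m:ℝ)) := by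
            congr 1
            rw [hmcast]
            field_simp
            ring
  · rintro ⟨C, hC⟩
    haveI : NeZero k := ⟨hk0⟩
    have hkr1 : (1:ℝ) < (k:ℝ) := by exact_mod_cast (by omega : 1 < k)
    have hkr0 : (0:ℝ) < (k:ℝ) := by linarith
    set β : ℝ := (γ-1)/γ with hβdef
    have hβ : 0 < β := by
      apply div_pos <;> linarith
    set ρ : ℝ := (k:ℝ) ^ β with hρdef
    have hρ : 1 < ρ := by
      rw [hρdef]
      exact (Real.one_lt_rpow_iff_of_pos hkr0).mpr (Or.inl ⟨hkr1, hβ⟩)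
    have main : ∀ n : ℕ, ρ ^ n ≤ (C:ℝ) * (2 * ((n:ℝ)+1)) := by
      intro n
      set x : V k := List.replicate n 0 with hx
      have hxlen : x.length = n := List.length_replicate
      have hroot : ([] : V k) ∈ ball x n := by
        show tdist x [] ≤ n
        unfold tdist
        rw [lcp_nil_right]
        simp [hxlen]
      have hnum : (1:ℝ≥0∞) ≤ wsum (fun y => wm k y ^ γ) (ball x n) := by
        have h := ENNReal.le_tsum (f := fun y : ball x n => wm k ↑y ^ γ) ⟨[], hroot⟩
        simpa [wm, wsum] using h
      have hden : ballCard x n ≤ (((n+1) * (2 * k ^ n) : ℕ) : ℝ≥0∞) := by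
        have h := ball_ncard_le hk x n
        rw [hxlen] at h
        exact Nat.cast_le.mpr h
      have s3 : 1 / (((n+1) * (2 * k ^ n) : ℕ) : ℝ≥0∞) ≤
          wsum (fun y => wm k y ^ γ) (ball x n) / ballCard x n :=
        ENNReal.div_le_div hnum hden
      have s4 : wsum (fun y => wm k y ^ γ) (ball x n) / ballCard x n ≤
          Mball (fun y => wm k y ^ γ) x :=
        le_iSup (fun r => wsum (fun y => wm k y ^ γ) (ball x r) / ballCard x r) n
      have s5 : ((1:ℝ≥0∞) / (((n+1) * (2 * k ^ n) : ℕ) : ℝ≥0∞)) ^ (1/γ) ≤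
          MsBall γ (wm k) x :=
        ENNReal.rpow_le_rpow (s3.trans s4) hγ1
      have s6 : ((1:ℝ≥0∞) / (((n+1) * (2 * k ^ n) : ℕ) : ℝ≥0∞)) ^ (1/γ) ≤
          (C:ℝ≥0∞) * (k : ℝ≥0∞) ^ (-(n:ℝ)) := by
        refine s5.trans ?_
        have hwx : wm k x = (k : ℝ≥0∞) ^ (-(n:ℝ)) := by rw [wm, hxlen]
        rw [← hwx]; exact hC x
      have hE1 : (1:ℝ≥0∞) ≤ ((2 * (n+1) : ℕ) : ℝ≥0∞) := by
        exact_mod_cast (by omega : 1 ≤ 2 * (n+1))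
      have hEne0 : ((2 * (n+1) : ℕ) : ℝ≥0∞) ≠ 0 := Nat.cast_ne_zero.mpr (by omega)
      have hEnet : ((2 * (n+1) : ℕ) : ℝ≥0∞) ≠ ⊤ := ENNReal.natCast_ne_top _
      have hDeq : (((n+1) * (2 * k ^ n) : ℕ) : ℝ≥0∞) =
          ((2 * (n+1) : ℕ) : ℝ≥0∞) * (k : ℝ≥0∞) ^ (n:ℝ) := by
        push_cast
        rw [ENNReal.rpow_natCast]
        ring
      have hDr : ((((n+1) * (2 * k ^ n) : ℕ) : ℝ≥0∞)) ^ (1/γ) ≤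
          ((2 * (n+1) : ℕ) : ℝ≥0∞) * (k : ℝ≥0∞) ^ ((n:ℝ)/γ) := by
        rw [hDeq, ENNReal.mul_rpow_of_nonneg _ _ hγ1, ← ENNReal.rpow_mul, mul_one_div]
        refine mul_le_mul_left ?_ _
        calc ((2 * (n+1) : ℕ) : ℝ≥0∞)^(1/γ) ≤ ((2 * (n+1) : ℕ) : ℝ≥0∞)^(1:ℝ) :=
              ENNReal.rpow_le_rpow_of_exponent_le hE1 hγle
          _ = _ := ENNReal.rpow_one _
      have s7 : 1 / (((2 * (n+1) : ℕ) : ℝ≥0∞) * (k : ℝ≥0∞) ^ ((n:ℝ)/γ)) ≤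
          (C:ℝ≥0∞) * (k : ℝ≥0∞) ^ (-(n:ℝ)) := by
        refine le_trans ?_ s6
        rw [ENNReal.div_rpow_of_nonneg _ _ hγ1, ENNReal.one_rpow]
        exact ENNReal.div_le_div le_rfl hDr
      have hprodne0 : ((2 * (n+1) : ℕ) : ℝ≥0∞) * (k : ℝ≥0∞) ^ ((n:ℝ)/γ) ≠ 0 := by
        apply mul_ne_zero hEne0
        exact (ENNReal.rpow_pos (pos_iff_ne_zero.mpr hK0) hKt).ne'
      have hprodnet : ((2 * (n+1) : ℕ) : ℝ≥0∞) * (k : ℝ≥0∞) ^ ((n:ℝ)/γ) ≠ ⊤ :=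
        ENNReal.mul_ne_top hEnet (ENNReal.rpow_ne_top_of_nonneg (by positivity) hKt)
      have s8 : (1:ℝ≥0∞) ≤ (C:ℝ≥0∞) * (k : ℝ≥0∞) ^ (-(n:ℝ)) *
          (((2 * (n+1) : ℕ) : ℝ≥0∞) * (k : ℝ≥0∞) ^ ((n:ℝ)/γ)) :=
        (ENNReal.div_le_iff_le_mul (Or.inl hprodne0) (Or.inl hprodnet)).mp s7
      have s9 := mul_le_mul_left s8 ((k : ℝ≥0∞) ^ ((n:ℝ) - (n:ℝ)/γ))
      rw [one_mul] at s9
      have hone : (k : ℝ≥0∞) ^ (-(n:ℝ)) * (k : ℝ≥0∞) ^ ((n:ℝ)/γ) *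
          (k : ℝ≥0∞) ^ ((n:ℝ) - (n:ℝ)/γ) = 1 := by
        rw [← Kadd, ← Kadd]
        norm_num
      have collapse : (C:ℝ≥0∞) * (k : ℝ≥0∞) ^ (-(n:ℝ)) *
          (((2 * (n+1) : ℕ) : ℝ≥0∞) * (k : ℝ≥0∞) ^ ((n:ℝ)/γ)) *
          (k : ℝ≥0∞) ^ ((n:ℝ) - (n:ℝ)/γ) = (C:ℝ≥0∞) * ((2 * (n+1) : ℕ) : ℝ≥0∞) := by
        calc (C:ℝ≥0∞) * (k : ℝ≥0∞) ^ (-(n:ℝ)) *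
            (((2 * (n+1) : ℕ) : ℝ≥0∞) * (k : ℝ≥0∞) ^ ((n:ℝ)/γ)) *
            (k : ℝ≥0∞) ^ ((n:ℝ) - (n:ℝ)/γ)
            = (C:ℝ≥0∞) * ((2 * (n+1) : ℕ) : ℝ≥0∞) *
              ((k : ℝ≥0∞) ^ (-(n:ℝ)) * (k : ℝ≥0∞) ^ ((n:ℝ)/γ) *
               (k : ℝ≥0∞) ^ ((n:ℝ) - (n:ℝ)/γ)) := by ring
          _ = (C:ℝ≥0∞) * ((2 * (n+1) : ℕ) : ℝ≥0∞) := by rw [hone, mul_one]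
      rw [collapse] at s9
      have hfin : (C:ℝ≥0∞) * ((2 * (n+1) : ℕ) : ℝ≥0∞) ≠ ⊤ :=
        ENNReal.mul_ne_top ENNReal.coe_ne_top hEnet
      have hexp : (0:ℝ) ≤ (n:ℝ) - (n:ℝ)/γ := by
        have h1 : (n:ℝ)/γ ≤ (n:ℝ) := div_le_self (Nat.cast_nonneg n) (by linarith)
        linarith
      have s10 := (ENNReal.toReal_le_toReal
        (ENNReal.rpow_ne_top_of_nonneg hexp hKt) hfin).mpr s9
      rw [← ENNReal.toReal_rpow, ENNReal.toReal_mul, ENNReal.toReal_natCast,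
        ENNReal.coe_toReal, ENNReal.toReal_natCast] at s10
      have hρn : ρ ^ n = (k:ℝ) ^ ((n:ℝ) - (n:ℝ)/γ) := by
        rw [hρdef, ← Real.rpow_natCast ((k:ℝ) ^ β) n, ← Real.rpow_mul hkr0.le]
        congr 1
        rw [hβdef]
        field_simp
      rw [hρn]
      calc (k:ℝ) ^ ((n:ℝ) - (n:ℝ)/γ) ≤ (C:ℝ) * ((2 * (n+1) : ℕ):ℝ) := s10
        _ = (C:ℝ) * (2 * ((n:ℝ)+1)) := by push_cast; ring
    set C' := (C:ℝ) with hC'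
    have hC'0 : 0 ≤ C' := C.coe_nonneg
    set δ : ℝ := ρ - 1 with hδdef
    have hδ0 : 0 < δ := by rw [hδdef]; linarith
    obtain ⟨mm, hmm⟩ := exists_nat_gt (8 * C' / δ^2 + 1)
    have hdiv0 : 0 ≤ 8 * C' / δ^2 := by positivity
    have hm1 : 1 ≤ (mm:ℝ) := by linarith
    have bern : 1 + (mm:ℝ) * δ ≤ ρ ^ mm := by
      have h := one_add_mul_le_pow (a := δ) (by linarith) mm
      have : 1 + δ = ρ := by rw [hδdef]; ring
      rwa [this] at h
    have hbig := main (2*mm)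
    have pw : ρ ^ (2*mm) = (ρ^mm)^2 := by rw [two_mul, pow_add, sq]
    have hm' : 8 * C' < (mm:ℝ) * δ^2 := by
      have h1 : 8*C'/δ^2 < mm := by linarith
      have h2 : 0 < δ^2 := by positivity
      calc 8*C' = (8*C'/δ^2) * δ^2 := by field_simp
        _ < mm * δ^2 := mul_lt_mul_of_pos_right h1 h2
    have bern2 : (1 + (mm:ℝ)*δ)^2 ≤ (ρ^mm)^2 := by
      have hp : (0:ℝ) ≤ 1 + (mm:ℝ)*δ := by positivity
      exact pow_le_pow_left₀ hp bern 2
    have h3 : 8 * C' * (mm:ℝ) ≤ (mm:ℝ)^2 * δ^2 := by nlinarith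
    have hcast : ((2*mm : ℕ):ℝ) = 2*(mm:ℝ) := by push_cast; ring
    rw [pw, hcast] at hbig
    nlinarith [mul_nonneg (Nat.cast_nonneg mm : (0:ℝ) ≤ mm) hδ0.le]
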